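/- Let Σ, Σ' ⊆ S be subsets such that W_Σ and W_{Σ'} are finite, let w ∈ N(Σ, Σ'), and let s ∈ S ∖ Σ'. Then the following conditions are equivalent: (i) ℓ(s w) = ℓ(w) − 1; (ii) s ∈ D(w₀^{Σ'} w) ∖ Σ' = D(w); (iii) the parabolic subgroup W_{Σ'∪{s}} is finite and ℓ(w₀^{Σ'∪{s}} w₀^{Σ'} w) = ℓ(w) − ℓ(w₀^{Σ'∪{s}} w₀^{Σ'}); (iv) T_{Σ'∪{s}} ∖ T_{Σ'} ⊆ T(w₀^{Σ'} w) ∖ T_{Σ'} = T(w). -/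

import Mathlib

/-!
Relative Coxeter groups: common definitions.

`(W, S)` is a Coxeter system (Mathlib's `CoxeterSystem M W`), `ℓ = cs.length`.
For `w : W`, `invSet cs w` is the set `T(w)` of left inversions of `w`, and
`descSet cs w = T(w) ∩ S` is `D(w)`.  For a subset `Sg ⊆ S` (playing the role of `Σ`),
`par Sg` is the standard parabolic subgroup `W_Σ`, `parRefl Sg` its set of
reflections `T_Σ`, `minRight cs Sg = W^Σ`, `minLeft cs Sg = ^ΣW`,
`relN cs Sg Sg' = N(Σ, Σ')`, `IsLongest cs Sg w` says `w` is a longest element of `W_Σ`,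
`longest cs Sg` is the longest element `w₀^Σ`, `relW cs Sg = W̃`,
`complSet cs Sg = Σ^∁`, `tilde cs Sg s = s̃ = w₀^{Σ∪{s}} w₀^Σ`, `relS cs Sg = S̃`,
`relLength cs Sg = ℓ̃ : W → ℕ∞`, and `GoodSubset cs Sg` records the standing
hypotheses (1) and (2) on `Σ`.
-/

set_option linter.unusedSectionVars false

namespace RelativeCoxeter

variable {B W : Type*} [Group W] {M : CoxeterMatrix B}

/-- The set `S` of simple reflections of the Coxeter system. -/
def simpleSet (cs : CoxeterSystem M W) : Set W := Set.range cs.simple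

/-- `T(w)`: the set of left inversions of `w`, i.e. reflections `t` with `ℓ(tw) < ℓ(w)`. -/
def invSet (cs : CoxeterSystem M W) (w : W) : Set W :=
  {t | cs.IsReflection t ∧ cs.length (t * w) < cs.length w}

/-- `D(w) = T(w) ∩ S`. -/
def descSet (cs : CoxeterSystem M W) (w : W) : Set W :=
  invSet cs w ∩ simpleSet cs

/-- The standard parabolic subgroup `W_Σ` generated by `Σ`. -/
def par (Sg : Set W) : Subgroup W := Subgroup.closure Sg

/-- `T_Σ`: the set of reflections of the Coxeter system `(W_Σ, Σ)`. -/
def parRefl (Sg : Set W) : Set W :=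
  {t | ∃ u ∈ par Sg, ∃ s ∈ Sg, t = u * s * u⁻¹}

/-- `W^Σ = {w : T(w⁻¹) ∩ T_Σ = ∅}`, minimal-length representatives of `W/W_Σ`. -/
def minRight (cs : CoxeterSystem M W) (Sg : Set W) : Set W :=
  {w | invSet cs w⁻¹ ∩ parRefl Sg = ∅}

/-- `^ΣW = {w : T(w) ∩ T_Σ = ∅}`, minimal-length representatives of `W_Σ\W`. -/
def minLeft (cs : CoxeterSystem M W) (Sg : Set W) : Set W :=
  {w | invSet cs w ∩ parRefl Sg = ∅}

/-- `N(Σ, Σ') = {y ∈ W^Σ ∩ ^{Σ'}W : y W_Σ y⁻¹ = W_{Σ'}}`. -/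
def relN (cs : CoxeterSystem M W) (Sg Sg' : Set W) : Set W :=
  {y | y ∈ minRight cs Sg ∧ y ∈ minLeft cs Sg' ∧
    (fun u => y * u * y⁻¹) '' (par Sg : Set W) = (par Sg' : Set W)}

/-- `w` is a longest element of `W_Σ`. -/
def IsLongest (cs : CoxeterSystem M W) (Sg : Set W) (w : W) : Prop :=
  w ∈ par Sg ∧ ∀ u ∈ par Sg, cs.length u ≤ cs.length w

/-- The longest element `w₀^Σ` of `W_Σ` (defined when it exists; junk value `1` otherwise). -/
noncomputable def longest (cs : CoxeterSystem M W) (Sg : Set W) : W :=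
  letI := Classical.propDecidable (∃ w, IsLongest cs Sg w)
  if h : ∃ w, IsLongest cs Sg w then h.choose else 1

/-- `W̃ = {w : w W_Σ w⁻¹ = W_Σ and T(w) ∩ T_Σ = ∅}`. -/
def relW (cs : CoxeterSystem M W) (Sg : Set W) : Set W :=
  {w | (fun u => w * u * w⁻¹) '' (par Sg : Set W) = (par Sg : Set W) ∧
    invSet cs w ∩ parRefl Sg = ∅}

/-- `Σ^∁ = {s ∈ S ∖ Σ : W_{Σ∪{s}} is finite}`. -/
def complSet (cs : CoxeterSystem M W) (Sg : Set W) : Set W :=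
  {s ∈ simpleSet cs \ Sg | ((par (Sg ∪ {s}) : Set W)).Finite}

/-- `s̃ = w₀^{Σ∪{s}} w₀^Σ`. -/
noncomputable def tilde (cs : CoxeterSystem M W) (Sg : Set W) (s : W) : W :=
  longest cs (Sg ∪ {s}) * longest cs Sg

/-- `S̃ = {s̃ : s ∈ Σ^∁}`. -/
noncomputable def relS (cs : CoxeterSystem M W) (Sg : Set W) : Set W :=
  {w | ∃ s ∈ complSet cs Sg, w = tilde cs Sg s}

/-- `ℓ̃(w) ∈ ℕ ∪ {∞}`: the minimal `q` such that `w = w₁ ⋯ w_q` with all `w_i ∈ S̃`. -/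
noncomputable def relLength (cs : CoxeterSystem M W) (Sg : Set W) (w : W) : ℕ∞ :=
  sInf {q : ℕ∞ | ∃ l : List W, (∀ x ∈ l, x ∈ relS cs Sg) ∧ l.prod = w ∧
    (l.length : ℕ∞) = q}

/-- The standing hypotheses on `Σ`: `Σ ⊆ S`, `W_Σ` is finite, and for every `Σ'` with
`Σ ⊆ Σ' ⊆ S` and `W_{Σ'}` finite, the longest element `w₀^{Σ'}` normalises `W_Σ`. -/
def GoodSubset (cs : CoxeterSystem M W) (Sg : Set W) : Prop :=
  Sg ⊆ simpleSet cs ∧ ((par Sg : Set W)).Finite ∧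
  ∀ Sg' : Set W, Sg ⊆ Sg' → Sg' ⊆ simpleSet cs → ((par Sg' : Set W)).Finite →
    ∀ w0 : W, IsLongest cs Sg' w0 →
      (fun u => w0 * u * w0⁻¹) '' (par Sg : Set W) = (par Sg : Set W)

variable (cs : CoxeterSystem M W)

/-! ### Auxiliary development: the sign representation and strong exchange -/

section SignRep

open List

private lemma zu_inv_eq (u : ℤˣ) : u⁻¹ = u := by
  rcases Int.units_eq_one_or u with h | h <;> simp [h]

private lemma zu_mul_self (u : ℤˣ) : u * u = 1 := by
  rcases Int.units_eq_one_or u with h | h <;> simp [h]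

private lemma zu_one_ne_neg_one : (1 : ℤˣ) ≠ -1 := by decide

/-- The generator action on `W × ℤˣ` used to prove the strong exchange property. -/
noncomputable def eta (i : B) : W × ℤˣ → W × ℤˣ := fun p =>
  letI := Classical.propDecidable (p.1 = cs.simple i)
  (cs.simple i * p.1 * cs.simple i, if p.1 = cs.simple i then -p.2 else p.2)

lemma eta_of_eq (i : B) {t : W} (h : t = cs.simple i) (e : ℤˣ) :
    eta cs i (t, e) = (cs.simple i * t * cs.simple i, -e) := by
  simp only [eta]; rw [if_pos h]

lemma eta_of_ne (i : B) {t : W} (h : t ≠ cs.simple i) (e : ℤˣ) :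
    eta cs i (t, e) = (cs.simple i * t * cs.simple i, e) := by
  simp only [eta]; rw [if_neg h]

private lemma conj_simple_conj_simple (i : B) (t : W) :
    cs.simple i * (cs.simple i * t * cs.simple i) * cs.simple i = t := by
  calc cs.simple i * (cs.simple i * t * cs.simple i) * cs.simple i
      = (cs.simple i * cs.simple i) * t * (cs.simple i * cs.simple i) := by group
    _ = t := by rw [cs.simple_mul_simple_self]; group

lemma eta_involutive (i : B) : Function.Involutive (eta cs i) := by
  rintro ⟨t, e⟩
  by_cases h : t = cs.simple i
  · rw [eta_of_eq cs i h e]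
    have h1 : cs.simple i * t * cs.simple i = cs.simple i := by
      rw [h, cs.simple_mul_simple_self, one_mul]
    rw [eta_of_eq cs i h1 (-e), neg_neg, conj_simple_conj_simple]
  · have h2 : cs.simple i * t * cs.simple i ≠ cs.simple i := by
      intro hc
      apply h
      have := congrArg (fun x => cs.simple i * x * cs.simple i) hc
      rw [conj_simple_conj_simple] at this
      rw [this, cs.simple_mul_simple_self, one_mul]
    rw [eta_of_ne cs i h e, eta_of_ne cs i h2 e, conj_simple_conj_simple]

/-- The generator action as a permutation. -/
noncomputable def etaPerm (i : B) : Equiv.Perm (W × ℤˣ) :=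
  Function.Involutive.toPerm _ (eta_involutive cs i)

lemma etaPerm_apply (i : B) (p : W × ℤˣ) : etaPerm cs i p = eta cs i p := rfl

/-- Product of signs attached to the occurrences of `t` in a list. -/
noncomputable def signAt (t : W) (l : List W) : ℤˣ :=
  letI := Classical.decEq W
  (l.map (fun r => if r = t then (-1 : ℤˣ) else 1)).prod

lemma signAt_nil (t : W) : signAt t ([] : List W) = 1 := rfl

lemma signAt_cons (t r : W) (l : List W) :
    signAt t (r :: l) = (letI := Classical.decEq W
      if r = t then (-1 : ℤˣ) else 1) * signAt t l := by
  simp [signAt]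

lemma signAt_append (t : W) (l l' : List W) :
    signAt t (l ++ l') = signAt t l * signAt t l' := by
  simp [signAt]

lemma signAt_of_not_mem {t : W} {l : List W} (h : t ∉ l) : signAt t l = 1 := by
  classical
  apply List.prod_eq_one
  intro x hx
  rw [List.mem_map] at hx
  obtain ⟨r, hr, rfl⟩ := hx
  rw [if_neg]
  intro hc; exact h (hc ▸ hr)

lemma prod_map_etaPerm_apply (ω : List B) (t : W) (e : ℤˣ) :
    ((ω.map (etaPerm cs)).prod) (t, e)
      = (cs.wordProd ω * t * (cs.wordProd ω)⁻¹,
          e * signAt t (cs.rightInvSeq ω)) := by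
  induction ω with
  | nil => simp [CoxeterSystem.wordProd_nil, signAt_nil, CoxeterSystem.rightInvSeq]
  | cons i ω ih =>
    rw [List.map_cons, List.prod_cons, Equiv.Perm.mul_apply, ih, etaPerm_apply]
    have hris : cs.rightInvSeq (i :: ω)
        = ((cs.wordProd ω)⁻¹ * cs.simple i * cs.wordProd ω) :: cs.rightInvSeq ω := rfl
    rw [hris, signAt_cons]
    have hfst : cs.simple i * (cs.wordProd ω * t * (cs.wordProd ω)⁻¹) * cs.simple i
        = cs.wordProd (i :: ω) * t * (cs.wordProd (i :: ω))⁻¹ := by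
      rw [cs.wordProd_cons, mul_inv_rev, cs.inv_simple]
      group
    by_cases hc : (cs.wordProd ω)⁻¹ * cs.simple i * cs.wordProd ω = t
    · have hc' : cs.wordProd ω * t * (cs.wordProd ω)⁻¹ = cs.simple i := by
        rw [← hc]; group
      rw [eta_of_eq cs i hc' (e * signAt t (cs.rightInvSeq ω)), if_pos hc, hfst]
      refine Prod.ext rfl ?_
      show -(e * signAt t (cs.rightInvSeq ω)) = e * (-1 * signAt t (cs.rightInvSeq ω))
      rw [neg_one_mul, mul_neg]
    · have hc' : cs.wordProd ω * t * (cs.wordProd ω)⁻¹ ≠ cs.simple i := by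
        intro h; apply hc; rw [← h]; group
      rw [eta_of_ne cs i hc' (e * signAt t (cs.rightInvSeq ω)), if_neg hc, hfst, one_mul]

private lemma alternatingWord_two_mul_succ (i j : B) (m : ℕ) :
    CoxeterSystem.alternatingWord i j (2 * (m + 1))
      = i :: j :: CoxeterSystem.alternatingWord i j (2 * m) := by
  have h1 : 2 * (m + 1) = (2 * m + 1) + 1 := by ring
  rw [h1, CoxeterSystem.alternatingWord_succ', CoxeterSystem.alternatingWord_succ']
  have h2 : ¬ Even (2 * m + 1) := by simp [Nat.even_add_one]
  have h3 : Even (2 * m) := even_two_mul m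
  rw [if_neg h2, if_pos h3]

private lemma prod_map_alternatingWord {G : Type*} [Monoid G] (f : B → G) (i j : B) (m : ℕ) :
    ((CoxeterSystem.alternatingWord i j (2 * m)).map f).prod = (f i * f j) ^ m := by
  induction m with
  | zero => simp [CoxeterSystem.alternatingWord]
  | succ m ih =>
    rw [alternatingWord_two_mul_succ, List.map_cons, List.map_cons, List.prod_cons,
      List.prod_cons, ih, pow_succ', mul_assoc]

lemma drop_alternatingWord (i j : B) (n q : ℕ) :
    (CoxeterSystem.alternatingWord i j n).drop q
      = CoxeterSystem.alternatingWord i j (n - q) := by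
  induction n generalizing q with
  | zero => simp [CoxeterSystem.alternatingWord]
  | succ n ih =>
    cases q with
    | zero => simp
    | succ q =>
      rw [CoxeterSystem.alternatingWord_succ', List.drop_succ_cons, ih q]
      congr 1
      omega

lemma getD_ris_alternatingWord (i j : B) (n p : ℕ) (hp : p < n) :
    (cs.rightInvSeq (CoxeterSystem.alternatingWord i j n)).getD p 1
      = (cs.wordProd (CoxeterSystem.alternatingWord i j (n - p - 1)))⁻¹
          * cs.wordProd (CoxeterSystem.alternatingWord i j (n - p)) := by
  rw [cs.getD_rightInvSeq]
  have hd1 : (CoxeterSystem.alternatingWord i j n).drop (p + 1)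
      = CoxeterSystem.alternatingWord i j (n - p - 1) := by
    rw [drop_alternatingWord]
    congr 1
  have hsucc : n - p = (n - p - 1) + 1 := by omega
  have hget : (CoxeterSystem.alternatingWord i j n)[p]?
      = some (if Even (n - p - 1) then j else i) := by
    have h0 : (CoxeterSystem.alternatingWord i j n)[p]?
        = ((CoxeterSystem.alternatingWord i j n).drop p)[0]? := by
      simp
    rw [h0, drop_alternatingWord]
    conv_lhs => rw [hsucc, CoxeterSystem.alternatingWord_succ']
    rfl
  rw [hd1, hget]
  have hw : cs.simple (if Even (n - p - 1) then j else i)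
        * cs.wordProd (CoxeterSystem.alternatingWord i j (n - p - 1))
      = cs.wordProd (CoxeterSystem.alternatingWord i j (n - p)) := by
    conv_rhs => rw [hsucc, CoxeterSystem.alternatingWord_succ', cs.wordProd_cons]
  rw [← hw]
  simp [mul_assoc]

lemma alternatingWord_add (i j : B) (m k : ℕ) :
    CoxeterSystem.alternatingWord i j (k + m)
      = (if Even k then CoxeterSystem.alternatingWord i j m
          else CoxeterSystem.alternatingWord j i m) ++ CoxeterSystem.alternatingWord i j k := by
  induction m with
  | zero =>
    by_cases hk : Even k <;> simp [hk, CoxeterSystem.alternatingWord]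
  | succ m ih =>
    have h1 : k + (m + 1) = (k + m) + 1 := by ring
    rw [h1, CoxeterSystem.alternatingWord_succ', ih]
    by_cases hk : Even k
    · rw [if_pos hk, if_pos hk, CoxeterSystem.alternatingWord_succ', List.cons_append]
      have : Even (k + m) ↔ Even m := by
        rw [Nat.even_add]; tauto
      by_cases hm : Even m
      · rw [if_pos (this.mpr hm), if_pos hm]
      · rw [if_neg (fun h => hm (this.mp h)), if_neg hm]
    · rw [if_neg hk, if_neg hk, CoxeterSystem.alternatingWord_succ', List.cons_append]
      have : Even (k + m) ↔ ¬ Even m := by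
        rw [Nat.even_add]; tauto
      by_cases hm : Even m
      · rw [if_neg (fun h => (this.mp h) hm), if_pos hm]
      · rw [if_pos (this.mpr hm), if_neg hm]

lemma wordProd_alternatingWord_add (i j : B) (k : ℕ) :
    cs.wordProd (CoxeterSystem.alternatingWord i j (k + M i j))
      = cs.wordProd (CoxeterSystem.alternatingWord i j (M i j))
          * cs.wordProd (CoxeterSystem.alternatingWord i j k) := by
  rw [alternatingWord_add, cs.wordProd_append]
  by_cases hk : Even k
  · rw [if_pos hk]
  · rw [if_neg hk]
    congr 1
    have := cs.wordProd_braidWord_eq j i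
    unfold CoxeterSystem.braidWord at this
    rw [M.symmetric j i] at this
    exact this

lemma getD_ris_alt_halves (i j : B) (p : ℕ) (hp : p < M i j) :
    (cs.rightInvSeq (CoxeterSystem.alternatingWord i j (2 * M i j))).getD p 1
      = (cs.rightInvSeq (CoxeterSystem.alternatingWord i j (2 * M i j))).getD (p + M i j) 1 := by
  rw [getD_ris_alternatingWord cs i j _ p (by omega),
    getD_ris_alternatingWord cs i j _ (p + M i j) (by omega)]
  have h1 : 2 * M i j - p - 1 = (M i j - p - 1) + M i j := by omega
  have h2 : 2 * M i j - p = (M i j - p) + M i j := by omega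
  have h3 : 2 * M i j - (p + M i j) - 1 = M i j - p - 1 := by omega
  have h4 : 2 * M i j - (p + M i j) = M i j - p := by omega
  rw [h1, h2, h3, h4, wordProd_alternatingWord_add cs, wordProd_alternatingWord_add cs]
  rw [mul_inv_rev]
  group

lemma signAt_ris_alt (i j : B) (t : W) :
    signAt t (cs.rightInvSeq (CoxeterSystem.alternatingWord i j (2 * M i j))) = 1 := by
  set L := cs.rightInvSeq (CoxeterSystem.alternatingWord i j (2 * M i j)) with hL
  have hlen : L.length = 2 * M i j := by
    rw [hL, cs.length_rightInvSeq, CoxeterSystem.length_alternatingWord]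
  have hhalf : L.take (M i j) = L.drop (M i j) := by
    apply List.ext_getElem
    · simp only [List.length_take, List.length_drop, hlen]
      omega
    · intro p hp1 hp2
      have hp : p < M i j := by simp [hlen] at hp1; omega
      rw [List.getElem_take, List.getElem_drop]
      rw [← List.getD_eq_getElem L 1 (by omega), ← List.getD_eq_getElem L 1 (by omega)]
      have := getD_ris_alt_halves cs i j p hp
      rw [← hL] at this
      rw [this]
      congr 1
      omega
  have : L = L.take (M i j) ++ L.drop (M i j) := (List.take_append_drop _ _).symm
  rw [this, signAt_append, hhalf, zu_mul_self]

lemma etaPerm_liftable : M.IsLiftable (fun i => etaPerm cs i) := by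
  intro i j
  apply Equiv.ext
  rintro ⟨t, e⟩
  have h1 : (etaPerm cs i * etaPerm cs j) ^ M i j
      = ((CoxeterSystem.alternatingWord i j (2 * M i j)).map (etaPerm cs)).prod :=
    (prod_map_alternatingWord (etaPerm cs) i j (M i j)).symm
  have h2 : cs.wordProd (CoxeterSystem.alternatingWord i j (2 * M i j)) = 1 := by
    have : cs.wordProd (CoxeterSystem.alternatingWord i j (2 * M i j))
        = (cs.simple i * cs.simple j) ^ M i j := by
      unfold CoxeterSystem.wordProd
      exact prod_map_alternatingWord cs.simple i j (M i j)
    rw [this, cs.simple_mul_simple_pow]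
  rw [h1, prod_map_etaPerm_apply, h2, signAt_ris_alt cs]
  simp [Equiv.Perm.one_apply]

/-- The sign representation of the Coxeter group. -/
noncomputable def phi : W →* Equiv.Perm (W × ℤˣ) :=
  cs.lift ⟨fun i => etaPerm cs i, etaPerm_liftable cs⟩

lemma phi_simple (i : B) : phi cs (cs.simple i) = etaPerm cs i :=
  cs.lift_apply_simple (etaPerm_liftable cs) i

lemma phi_wordProd (ω : List B) :
    phi cs (cs.wordProd ω) = ((ω.map (etaPerm cs))).prod := by
  unfold CoxeterSystem.wordProd
  rw [MonoidHom.map_list_prod, List.map_map]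
  congr 1
  apply List.map_congr_left
  intro i _
  exact phi_simple cs i

/-- `sgn cs w t = -1` iff `t` is a right inversion of `w` (for reflections `t`). -/
noncomputable def sgn (w t : W) : ℤˣ := ((phi cs w) (t, 1)).2

lemma sgn_wordProd (ω : List B) (t : W) :
    sgn cs (cs.wordProd ω) t = signAt t (cs.rightInvSeq ω) := by
  unfold sgn
  rw [phi_wordProd, prod_map_etaPerm_apply, one_mul]

lemma phi_apply (w t : W) (e : ℤˣ) :
    phi cs w (t, e) = (w * t * w⁻¹, e * sgn cs w t) := by
  obtain ⟨ω, rfl⟩ := cs.wordProd_surjective w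
  rw [phi_wordProd, prod_map_etaPerm_apply, sgn_wordProd]

lemma sgn_mul (a b t : W) :
    sgn cs (a * b) t = sgn cs b t * sgn cs a (b * t * b⁻¹) := by
  have h1 : phi cs (a * b) (t, 1) = phi cs a (phi cs b (t, 1)) := by
    rw [map_mul]; rfl
  rw [phi_apply cs b t 1, one_mul, phi_apply cs a (b * t * b⁻¹) (sgn cs b t),
    phi_apply cs (a * b) t 1, one_mul] at h1
  exact congrArg Prod.snd h1

lemma sgn_one (t : W) : sgn cs 1 t = 1 := by
  unfold sgn
  rw [map_one]
  rfl

lemma sgn_inv_mul_cancel (u t : W) : sgn cs u⁻¹ t * sgn cs u (u⁻¹ * t * u) = 1 := by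
  have := sgn_mul cs u u⁻¹ t
  rw [mul_inv_cancel, sgn_one, inv_inv] at this
  exact this.symm

lemma sgn_simple_self (i : B) : sgn cs (cs.simple i) (cs.simple i) = -1 := by
  have h : cs.simple i = cs.wordProd [i] := (cs.wordProd_singleton i).symm
  rw [h, sgn_wordProd]
  show signAt (cs.wordProd [i]) (cs.rightInvSeq [i]) = -1
  rw [cs.rightInvSeq_singleton, signAt_cons, signAt_nil, cs.wordProd_singleton]
  rw [if_pos rfl, mul_one]

lemma sgn_refl_self {t : W} (ht : cs.IsReflection t) : sgn cs t t = -1 := by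
  obtain ⟨u, i, rfl⟩ := ht
  set t := u * cs.simple i * u⁻¹ with hT
  have key1 : u⁻¹ * t * u = cs.simple i := by rw [hT]; group
  have e1 : sgn cs t t = sgn cs (cs.simple i * u⁻¹) t
      * sgn cs u ((cs.simple i * u⁻¹) * t * (cs.simple i * u⁻¹)⁻¹) := by
    have h0 := sgn_mul cs u (cs.simple i * u⁻¹) t
    have hTT : u * (cs.simple i * u⁻¹) = t := by rw [hT]; group
    rw [hTT] at h0
    exact h0
  have e2 : (cs.simple i * u⁻¹) * t * (cs.simple i * u⁻¹)⁻¹ = cs.simple i := by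
    rw [mul_inv_rev, inv_inv, cs.inv_simple]
    calc cs.simple i * u⁻¹ * t * (u * cs.simple i)
        = cs.simple i * (u⁻¹ * t * u) * cs.simple i := by group
      _ = cs.simple i * cs.simple i * cs.simple i := by rw [key1]
      _ = cs.simple i := by rw [cs.simple_mul_simple_self, one_mul]
  have e3 : sgn cs (cs.simple i * u⁻¹) t
      = sgn cs u⁻¹ t * sgn cs (cs.simple i) (u⁻¹ * t * u) := by
    rw [sgn_mul cs]
    congr 2
    rw [inv_inv]
  rw [e1, e2, e3, key1, sgn_simple_self cs]
  have hcancel := sgn_inv_mul_cancel cs u t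
  rw [key1] at hcancel
  calc sgn cs u⁻¹ t * -1 * sgn cs u (cs.simple i)
      = -1 * (sgn cs u⁻¹ t * sgn cs u (cs.simple i)) := by
        rw [mul_comm (sgn cs u⁻¹ t) (-1 : ℤˣ), mul_assoc]
    _ = -1 * 1 := by rw [hcancel]
    _ = -1 := mul_one _

theorem length_lt_of_sgn_eq_neg_one {t : W} (w : W) (h : sgn cs w t = -1) :
    cs.length (w * t) < cs.length w := by
  obtain ⟨ω, hred, rfl⟩ := cs.exists_reduced_word' w
  rw [sgn_wordProd cs] at h
  have hmem : t ∈ cs.rightInvSeq ω := by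
    by_contra hn
    rw [signAt_of_not_mem hn] at h
    exact zu_one_ne_neg_one h
  exact (cs.isRightInversion_of_mem_rightInvSeq hred hmem).2

theorem sgn_eq_neg_one_iff {t : W} (ht : cs.IsReflection t) (w : W) :
    sgn cs w t = -1 ↔ cs.length (w * t) < cs.length w := by
  constructor
  · exact length_lt_of_sgn_eq_neg_one cs w
  · intro h
    have hw : w = (w * t) * t := by
      rw [mul_assoc, ht.mul_self, mul_one]
    have hstep : sgn cs w t = sgn cs t t * sgn cs (w * t) (t * t * t⁻¹) := by
      conv_lhs => rw [hw]
      rw [sgn_mul cs]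
    have ht3 : t * t * t⁻¹ = t := by rw [ht.mul_self, one_mul, ht.inv]
    rw [ht3, sgn_refl_self cs ht] at hstep
    rcases Int.units_eq_one_or (sgn cs (w * t) t) with h1 | h1
    · rw [hstep, h1, mul_one]
    · exfalso
      have := length_lt_of_sgn_eq_neg_one cs (w * t) h1
      rw [mul_assoc, ht.mul_self, mul_one] at this
      omega

theorem mem_rightInvSeq_of_isRightInversion {ω : List B} (hred : cs.IsReduced ω) {t : W}
    (ht : cs.IsRightInversion (cs.wordProd ω) t) : t ∈ cs.rightInvSeq ω := by
  by_contra hn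
  have h := (sgn_eq_neg_one_iff cs ht.1 (cs.wordProd ω)).mpr ht.2
  rw [sgn_wordProd, signAt_of_not_mem hn] at h
  exact zu_one_ne_neg_one h

theorem mem_leftInvSeq_of_isLeftInversion {ω : List B} (hred : cs.IsReduced ω) {t : W}
    (ht : cs.IsLeftInversion (cs.wordProd ω) t) : t ∈ cs.leftInvSeq ω := by
  have hrev : cs.IsReduced ω.reverse := (cs.isReduced_reverse_iff ω).mpr hred
  have h1 : cs.IsRightInversion (cs.wordProd ω.reverse) t := by
    rw [cs.wordProd_reverse]
    exact cs.isRightInversion_inv_iff.mpr ht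
  have h2 := mem_rightInvSeq_of_isRightInversion cs hrev h1
  rw [cs.rightInvSeq_reverse] at h2
  exact (List.mem_reverse).mp h2

end SignRep


section InvSetBasics

lemma mem_invSet_iff {w t : W} :
    t ∈ invSet cs w ↔ cs.IsReflection t ∧ cs.length (t * w) < cs.length w := Iff.rfl

lemma mem_invSet_iff_mem_leftInvSeq {ω : List B} (hred : cs.IsReduced ω) (t : W) :
    t ∈ invSet cs (cs.wordProd ω) ↔ t ∈ cs.leftInvSeq ω := by
  constructor
  · intro h
    exact mem_leftInvSeq_of_isLeftInversion cs hred ⟨h.1, h.2⟩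
  · intro h
    have := cs.isLeftInversion_of_mem_leftInvSeq hred h
    exact ⟨this.1, this.2⟩

lemma leftInvSeq_append (α β : List B) :
    cs.leftInvSeq (α ++ β) = cs.leftInvSeq α
      ++ (cs.leftInvSeq β).map (fun t => cs.wordProd α * t * (cs.wordProd α)⁻¹) := by
  induction α with
  | nil =>
    simp [CoxeterSystem.wordProd_nil]
  | cons i α ih =>
    have hdef : ∀ (γ : List B), cs.leftInvSeq (i :: γ)
        = cs.simple i :: (cs.leftInvSeq γ).map (MulAut.conj (cs.simple i)) := fun _ => rfl
    rw [List.cons_append, hdef, hdef, ih, List.map_append, List.map_map, cs.wordProd_cons]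
    rw [List.cons_append]
    congr 2
    apply List.map_congr_left
    intro t _
    simp only [Function.comp_apply, MulAut.conj_apply, mul_inv_rev, cs.inv_simple]
    group

lemma rightInvSeq_append (α β : List B) :
    cs.rightInvSeq (α ++ β)
      = (cs.rightInvSeq α).map (fun t => (cs.wordProd β)⁻¹ * t * cs.wordProd β)
          ++ cs.rightInvSeq β := by
  induction α with
  | nil => simp
  | cons j γ ih =>
    have hdef : ∀ (δ : List B), cs.rightInvSeq (j :: δ)
        = ((cs.wordProd δ)⁻¹ * cs.simple j * cs.wordProd δ) :: cs.rightInvSeq δ := fun _ => rfl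
    rw [List.cons_append, hdef, hdef, ih, List.map_cons, List.cons_append]
    congr 1
    rw [cs.wordProd_append, mul_inv_rev]
    group

lemma invSet_mul_of_length_add {x y : W}
    (hxy : cs.length (x * y) = cs.length x + cs.length y) :
    invSet cs (x * y) = invSet cs x ∪ (fun t => x * t * x⁻¹) '' invSet cs y := by
  obtain ⟨α, hα, rfl⟩ := cs.exists_reduced_word' x
  obtain ⟨β, hβ, rfl⟩ := cs.exists_reduced_word' y
  have hprod : cs.wordProd (α ++ β) = cs.wordProd α * cs.wordProd β := cs.wordProd_append α β
  have hred : cs.IsReduced (α ++ β) := by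
    unfold CoxeterSystem.IsReduced at *
    rw [hprod, hxy, List.length_append, hα, hβ]
  ext t
  rw [Set.mem_union, ← hprod]
  rw [mem_invSet_iff_mem_leftInvSeq cs hred, leftInvSeq_append, List.mem_append]
  constructor
  · rintro (h1 | h1)
    · exact Or.inl ((mem_invSet_iff_mem_leftInvSeq cs hα t).mpr h1)
    · obtain ⟨r, hr, rfl⟩ := List.mem_map.mp h1
      exact Or.inr ⟨r, (mem_invSet_iff_mem_leftInvSeq cs hβ r).mpr hr, rfl⟩
  · rintro (h1 | h1)
    · exact Or.inl ((mem_invSet_iff_mem_leftInvSeq cs hα t).mp h1)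
    · obtain ⟨r, hr, rfl⟩ := h1
      exact Or.inr (List.mem_map.mpr ⟨r, (mem_invSet_iff_mem_leftInvSeq cs hβ r).mp hr, rfl⟩)

end InvSetBasics

section Deletion

lemma exists_reduced_sublist (ω : List B) :
    ∃ ω', ω'.Sublist ω ∧ cs.IsReduced ω' ∧ cs.wordProd ω' = cs.wordProd ω := by
  generalize hn : ω.length = n
  induction n using Nat.strong_induction_on generalizing ω with
  | _ n ih =>
  by_cases hred : cs.IsReduced ω
  · exact ⟨ω, List.Sublist.refl ω, hred, rfl⟩
  · classical
    have hex : ∃ k, ¬ cs.IsReduced (ω.take (k + 1)) := by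
      refine ⟨ω.length, ?_⟩
      rwa [List.take_of_length_le (by omega)]
    set k := Nat.find hex with hkdef
    have hk : ¬ cs.IsReduced (ω.take (k + 1)) := Nat.find_spec hex
    have hk_red : cs.IsReduced (ω.take k) := by
      rcases Nat.eq_zero_or_pos k with h0 | h0
      · rw [h0]
        simp [CoxeterSystem.IsReduced]
      · have := Nat.find_min hex (show k - 1 < k by omega)
        rw [not_not] at this
        rwa [show k - 1 + 1 = k by omega] at this
    have hlen1 : 1 ≤ ω.length := by
      rcases ω with _ | ⟨a, ω0⟩
      · exact absurd (by simp [CoxeterSystem.IsReduced] : cs.IsReduced ([] : List B)) hred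
      · simp
    have hklt : k < ω.length := by
      have h1 : ¬ cs.IsReduced (ω.take ((ω.length - 1) + 1)) := by
        rw [show ω.length - 1 + 1 = ω.length by omega, List.take_length]
        exact hred
      have := Nat.find_min' hex h1
      omega
    set c := ω.get ⟨k, hklt⟩ with hcdef
    have htake : ω.take (k + 1) = ω.take k ++ [c] := by
      rw [List.take_succ, List.getElem?_eq_getElem hklt]
      rfl
    have hx : cs.length (cs.wordProd (ω.take k)) = k := by
      have := hk_red
      unfold CoxeterSystem.IsReduced at this
      rwa [List.length_take, min_eq_left (by omega)] at this
    have hxsc : cs.length (cs.wordProd (ω.take k) * cs.simple c) + 1 = k := by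
      have hπ : cs.wordProd (ω.take (k + 1)) = cs.wordProd (ω.take k) * cs.simple c := by
        rw [htake, cs.wordProd_append, cs.wordProd_singleton]
      have hlen : (ω.take (k + 1)).length = k + 1 := by
        rw [List.length_take]
        omega
      rcases cs.length_mul_simple (cs.wordProd (ω.take k)) c with h1 | h1
      · exfalso
        apply hk
        unfold CoxeterSystem.IsReduced
        rw [hπ, h1, hx, hlen]
      · omega
    have hinv : cs.IsRightInversion (cs.wordProd (ω.take k)) (cs.simple c) :=
      ⟨cs.isReflection_simple c, by omega⟩
    have hmem : cs.simple c ∈ cs.rightInvSeq (ω.take k) :=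
      mem_rightInvSeq_of_isRightInversion cs hk_red hinv
    obtain ⟨j, hj, hval⟩ := List.mem_iff_getElem.mp hmem
    have hjk : j < k := by
      rw [cs.length_rightInvSeq, List.length_take] at hj
      omega
    have hexch : cs.wordProd (ω.take k) * cs.simple c
        = cs.wordProd ((ω.take k).eraseIdx j) := by
      have := cs.wordProd_mul_getD_rightInvSeq (ω.take k) j
      rwa [List.getD_eq_getElem _ 1 hj, hval] at this
    have hdropk : ω.drop k = c :: ω.drop (k + 1) := List.drop_eq_getElem_cons hklt
    have hωsplit : cs.wordProd ω
        = cs.wordProd ((ω.take k).eraseIdx j ++ ω.drop (k + 1)) := by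
      conv_lhs => rw [← List.take_append_drop k ω]
      rw [cs.wordProd_append, cs.wordProd_append, hdropk, cs.wordProd_cons, ← hexch]
      group
    have hsub2 : ((ω.take k).eraseIdx j ++ ω.drop (k + 1)).Sublist ω := by
      conv_rhs => rw [← List.take_append_drop k ω]
      apply List.Sublist.append
      · exact List.eraseIdx_sublist _ j
      · rw [hdropk]
        exact List.sublist_cons_self c _
    have hlen2 : ((ω.take k).eraseIdx j ++ ω.drop (k + 1)).length < n := by
      have h1 : ((ω.take k).eraseIdx j).length + 1 = (ω.take k).length :=
        List.length_eraseIdx_add_one (by rw [List.length_take]; omega)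
      rw [List.length_take] at h1
      rw [List.length_append, List.length_drop]
      omega
    obtain ⟨ω', hsub', hred', hprod'⟩ :=
      ih _ hlen2 ((ω.take k).eraseIdx j ++ ω.drop (k + 1)) rfl
    exact ⟨ω', hsub'.trans hsub2, hred', by rw [hprod', ← hωsplit]⟩

end Deletion


section Parabolic

variable (Sg : Set W)

lemma wordProd_mem_par {ω : List B} (h : ∀ i ∈ ω, cs.simple i ∈ Sg) :
    cs.wordProd ω ∈ par Sg := by
  induction ω with
  | nil => rw [cs.wordProd_nil]; exact one_mem _
  | cons i ω ih =>
    rw [cs.wordProd_cons]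
    exact mul_mem (Subgroup.subset_closure (h i (by simp)))
      (ih (fun j hj => h j (by simp [hj])))

lemma mem_par_iff (hSg : Sg ⊆ simpleSet cs) (u : W) :
    u ∈ par Sg ↔ ∃ ω : List B, (∀ i ∈ ω, cs.simple i ∈ Sg) ∧ cs.wordProd ω = u := by
  constructor
  · intro hu
    induction hu using Subgroup.closure_induction with
    | mem x hx =>
      obtain ⟨i, hi⟩ := hSg hx
      exact ⟨[i], by simp [hi, hx], by rw [cs.wordProd_singleton, hi]⟩
    | one => exact ⟨[], by simp, cs.wordProd_nil⟩
    | mul x y hx hy ihx ihy =>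
      obtain ⟨ωx, hωx, hπx⟩ := ihx
      obtain ⟨ωy, hωy, hπy⟩ := ihy
      refine ⟨ωx ++ ωy, ?_, by rw [cs.wordProd_append, hπx, hπy]⟩
      intro i hi
      rcases List.mem_append.mp hi with h | h
      · exact hωx i h
      · exact hωy i h
    | inv x hx ihx =>
      obtain ⟨ω, hω, hπ⟩ := ihx
      refine ⟨ω.reverse, ?_, by rw [cs.wordProd_reverse, hπ]⟩
      intro i hi
      exact hω i (List.mem_reverse.mp hi)
  · rintro ⟨ω, hω, rfl⟩
    exact wordProd_mem_par cs Sg hω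

lemma exists_reduced_par_word (hSg : Sg ⊆ simpleSet cs) {u : W} (hu : u ∈ par Sg) :
    ∃ ω, cs.IsReduced ω ∧ (∀ i ∈ ω, cs.simple i ∈ Sg) ∧ cs.wordProd ω = u := by
  obtain ⟨ω, hω, rfl⟩ := (mem_par_iff cs Sg hSg u).mp hu
  obtain ⟨ω', hsub, hred, hprod⟩ := exists_reduced_sublist cs ω
  exact ⟨ω', hred, fun i hi => hω i (hsub.mem hi), hprod⟩

lemma mem_of_mem_par_length_one (hSg : Sg ⊆ simpleSet cs) {u : W} (hu : u ∈ par Sg)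
    (h : cs.length u = 1) : u ∈ Sg := by
  obtain ⟨ω, hred, hlet, rfl⟩ := exists_reduced_par_word cs Sg hSg hu
  have hl : ω.length = 1 := by
    have := hred
    unfold CoxeterSystem.IsReduced at this
    omega
  obtain ⟨i, rfl⟩ := List.length_eq_one_iff.mp hl
  rw [cs.wordProd_singleton]
  exact hlet i (by simp)

lemma parRefl_subset_par : parRefl Sg ⊆ par Sg := by
  rintro t ⟨u, hu, σ, hσ, rfl⟩
  exact mul_mem (mul_mem hu (Subgroup.subset_closure hσ)) (inv_mem hu)

lemma isReflection_of_mem_parRefl (hSg : Sg ⊆ simpleSet cs) {t : W}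
    (ht : t ∈ parRefl Sg) : cs.IsReflection t := by
  obtain ⟨u, hu, σ, hσ, rfl⟩ := ht
  obtain ⟨i, hi⟩ := hSg hσ
  exact ⟨u, i, by rw [hi]⟩

lemma simple_mem_parRefl {σ : W} (h : σ ∈ Sg) : σ ∈ parRefl Sg :=
  ⟨1, one_mem _, σ, h, by group⟩

lemma conj_mem_parRefl {u t : W} (hu : u ∈ par Sg) (ht : t ∈ parRefl Sg) :
    u * t * u⁻¹ ∈ parRefl Sg := by
  obtain ⟨v, hv, σ, hσ, rfl⟩ := ht
  exact ⟨u * v, mul_mem hu hv, σ, hσ, by group⟩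

/-- If `T(b) ∩ T_Σ = ∅` then lengths add: `ℓ(ub) = ℓ(u) + ℓ(b)` for `u ∈ W_Σ`. -/
lemma length_mul_of_minLeft (hSg : Sg ⊆ simpleSet cs) {b : W}
    (hb : invSet cs b ∩ parRefl Sg = ∅) :
    ∀ u ∈ par Sg, cs.length (u * b) = cs.length u + cs.length b := by
  have main : ∀ (ω : List B), cs.IsReduced ω → (∀ i ∈ ω, cs.simple i ∈ Sg) →
      cs.length (cs.wordProd ω * b) = ω.length + cs.length b := by
    intro ω
    induction ω with
    | nil => intro _ _; simp [cs.wordProd_nil]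
    | cons i ω ih =>
      intro hred hlet
      have hredω : cs.IsReduced ω := by
        simpa using hred.drop 1
      have ihω := ih hredω (fun j hj => hlet j (by simp [hj]))
      have hℓω : cs.length (cs.wordProd ω) = ω.length := hredω
      have hℓiω : cs.length (cs.wordProd (i :: ω)) = ω.length + 1 := by
        have := hred
        unfold CoxeterSystem.IsReduced at this
        rw [this]
        simp
      rw [cs.wordProd_cons, mul_assoc]
      rcases cs.length_simple_mul (cs.wordProd ω * b) i with h1 | h1
      · rw [h1, ihω]
        simp
        omega
      · exfalso
        have hsi : cs.simple i ∈ invSet cs (cs.wordProd ω * b) :=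
          ⟨cs.isReflection_simple i, by omega⟩
        have hsplit := invSet_mul_of_length_add cs
          (x := cs.wordProd ω) (y := b) (by rw [ihω, hℓω])
        rw [hsplit] at hsi
        rcases hsi with h2 | h2
        · have hlt : cs.length (cs.simple i * cs.wordProd ω) < ω.length := by
            have := h2.2
            omega
          rw [← cs.wordProd_cons, hℓiω] at hlt
          omega
        · obtain ⟨r, hr, hconj⟩ := h2
          have hrval : r = (cs.wordProd ω)⁻¹ * cs.simple i * cs.wordProd ω := by
            rw [← hconj]; group
          have hrpar : r ∈ parRefl Sg := by
            rw [hrval]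
            have : (cs.wordProd ω)⁻¹ * cs.simple i * cs.wordProd ω
                = (cs.wordProd ω)⁻¹ * cs.simple i * ((cs.wordProd ω)⁻¹)⁻¹ := by group
            rw [this]
            exact ⟨(cs.wordProd ω)⁻¹,
              inv_mem (wordProd_mem_par cs Sg (fun j hj => hlet j (by simp [hj]))),
              cs.simple i, hlet i (by simp), rfl⟩
          have : r ∈ invSet cs b ∩ parRefl Sg := ⟨hr, hrpar⟩
          rw [hb] at this
          exact this
  intro u hu
  obtain ⟨ω, hred, hlet, rfl⟩ := exists_reduced_par_word cs Sg hSg hu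
  have hℓ : cs.length (cs.wordProd ω) = ω.length := hred
  rw [main ω hred hlet, hℓ]

/-- If `T_Σ ⊆ T(a)` then `ℓ(ua) = ℓ(a) - ℓ(u)` for `u ∈ W_Σ`. -/
lemma length_mul_of_inv_superset (hSg : Sg ⊆ simpleSet cs) {a : W}
    (ha : parRefl Sg ⊆ invSet cs a) :
    ∀ u ∈ par Sg, cs.length (u * a) + cs.length u = cs.length a := by
  have main : ∀ (ω : List B), cs.IsReduced ω → (∀ i ∈ ω, cs.simple i ∈ Sg) →
      cs.length (cs.wordProd ω * a) + ω.length = cs.length a := by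
    intro ω
    induction ω with
    | nil => intro _ _; simp [cs.wordProd_nil]
    | cons i ω ih =>
      intro hred hlet
      have hredω : cs.IsReduced ω := by
        simpa using hred.drop 1
      have ihω := ih hredω (fun j hj => hlet j (by simp [hj]))
      have hℓω : cs.length (cs.wordProd ω) = ω.length := hredω
      have hℓiω : cs.length (cs.wordProd (i :: ω)) = ω.length + 1 := by
        have := hred
        unfold CoxeterSystem.IsReduced at this
        rw [this]; simp
      have hωpar : cs.wordProd ω ∈ par Sg :=
        wordProd_mem_par cs Sg (fun j hj => hlet j (by simp [hj]))
      -- `a = (π ω)⁻¹ * (π ω * a)` with lengths adding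
      have hadd : cs.length ((cs.wordProd ω)⁻¹ * (cs.wordProd ω * a))
          = cs.length ((cs.wordProd ω)⁻¹) + cs.length (cs.wordProd ω * a) := by
        have h1 : (cs.wordProd ω)⁻¹ * (cs.wordProd ω * a) = a := by group
        rw [h1, cs.length_inv, hℓω]
        omega
      have hsplit := invSet_mul_of_length_add cs hadd
      have hfact : (cs.wordProd ω)⁻¹ * (cs.wordProd ω * a) = a := by group
      rw [hfact] at hsplit
      set t0 := (cs.wordProd ω)⁻¹ * cs.simple i * cs.wordProd ω with ht0
      have ht0par : t0 ∈ parRefl Sg := by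
        have : t0 = (cs.wordProd ω)⁻¹ * cs.simple i * ((cs.wordProd ω)⁻¹)⁻¹ := by
          rw [ht0]; group
        rw [this]
        exact ⟨(cs.wordProd ω)⁻¹, inv_mem hωpar, cs.simple i, hlet i (by simp), rfl⟩
      have ht0inv : t0 ∈ invSet cs a := ha ht0par
      rw [hsplit] at ht0inv
      have hkey : cs.simple i ∈ invSet cs (cs.wordProd ω * a) := by
        rcases ht0inv with h2 | h2
        · exfalso
          have hlt := h2.2
          have : t0 * (cs.wordProd ω)⁻¹ = (cs.wordProd ω)⁻¹ * cs.simple i := by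
            rw [ht0]; group
          rw [this] at hlt
          have heq : cs.length ((cs.wordProd ω)⁻¹ * cs.simple i)
              = cs.length (cs.simple i * cs.wordProd ω) := by
            rw [← cs.length_inv, mul_inv_rev, cs.inv_simple, inv_inv]
          rw [heq, ← cs.wordProd_cons, hℓiω, cs.length_inv, hℓω] at hlt
          omega
        · obtain ⟨r, hr, hconj⟩ := h2
          have : r = cs.simple i := by
            have h3 : (cs.wordProd ω)⁻¹ * r * ((cs.wordProd ω)⁻¹)⁻¹ = t0 := hconj
            rw [ht0] at h3
            have := congrArg (fun x => cs.wordProd ω * x * (cs.wordProd ω)⁻¹) h3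
            calc r = cs.wordProd ω * ((cs.wordProd ω)⁻¹ * r * ((cs.wordProd ω)⁻¹)⁻¹)
                  * (cs.wordProd ω)⁻¹ := by group
              _ = cs.wordProd ω * ((cs.wordProd ω)⁻¹ * cs.simple i * cs.wordProd ω)
                  * (cs.wordProd ω)⁻¹ := by rw [h3]
              _ = cs.simple i := by group
          rwa [← this]
      rcases cs.length_simple_mul (cs.wordProd ω * a) i with h1 | h1
      · exfalso
        have := hkey.2
        omega
      · have hg : cs.wordProd (i :: ω) * a = cs.simple i * (cs.wordProd ω * a) := by
          rw [cs.wordProd_cons]; group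
        rw [hg, List.length_cons]
        omega
  intro u hu
  obtain ⟨ω, hred, hlet, rfl⟩ := exists_reduced_par_word cs Sg hSg hu
  have hℓ : cs.length (cs.wordProd ω) = ω.length := hred
  rw [hℓ]
  exact main ω hred hlet

end Parabolic


section DescentAbsorb

/-- Key lemma: if every element of `Σ` is a right descent of `w`, then
`ℓ(wu) = ℓ(w) - ℓ(u)` for every `u ∈ W_Σ`. -/
lemma descent_absorb_right (Sg : Set W) (hSg : Sg ⊆ simpleSet cs) {w : W}
    (hd : ∀ σ ∈ Sg, cs.length (w * σ) < cs.length w) :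
    ∀ u ∈ par Sg, cs.length (w * u) + cs.length u = cs.length w := by
  have main : ∀ (ω : List B), cs.IsReduced ω → (∀ i ∈ ω, cs.simple i ∈ Sg) →
      ∃ z : W, w = z * cs.wordProd ω ∧ cs.length w = cs.length z + ω.length := by
    intro ω
    induction ω using List.reverseRecOn with
    | nil => intro _ _; exact ⟨w, by rw [cs.wordProd_nil, mul_one], by simp⟩
    | append_singleton α i ih =>
      intro hred hlet
      have hα_red : cs.IsReduced α := by
        have := hred.take α.length
        rwa [List.take_left] at this
      obtain ⟨z, hzw, hzlen⟩ := ih hα_red (fun j hj => hlet j (by simp [hj]))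
      obtain ⟨ωz, hωz_red, hzeq⟩ := cs.exists_reduced_word' z
      have hℓα : cs.length (cs.wordProd α) = α.length := hα_red
      have hℓαi : cs.length (cs.wordProd (α ++ [i])) = α.length + 1 := by
        have h0 := hred
        unfold CoxeterSystem.IsReduced at h0
        rw [h0]; simp
      have hℓz : cs.length z = ωz.length := by rw [hzeq]; exact hωz_red
      have hΩprod : cs.wordProd (ωz ++ α) = w := by
        rw [cs.wordProd_append, ← hzeq, ← hzw]
      have hΩred : cs.IsReduced (ωz ++ α) := by
        unfold CoxeterSystem.IsReduced
        rw [hΩprod, List.length_append, hzlen, hℓz]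
      have hσ : cs.simple i ∈ Sg := hlet i (by simp)
      have hσw : cs.length (w * cs.simple i) < cs.length w := hd _ hσ
      have hπαi : cs.wordProd (α ++ [i]) = cs.wordProd α * cs.simple i := by
        rw [cs.wordProd_append, cs.wordProd_singleton]
      have hinv : cs.IsRightInversion (cs.wordProd (ωz ++ α)) (cs.simple i) := by
        rw [hΩprod]; exact ⟨cs.isReflection_simple i, hσw⟩
      have hmem := mem_rightInvSeq_of_isRightInversion cs hΩred hinv
      rw [rightInvSeq_append cs] at hmem
      rcases List.mem_append.mp hmem with hm | hm
      swap
      · exfalso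
        have h2 := cs.isRightInversion_of_mem_rightInvSeq hα_red hm
        have h3 := h2.2
        rw [← hπαi] at h3
        rw [hℓαi, hℓα] at h3
        omega
      · obtain ⟨j0, hj0, hval⟩ := List.mem_iff_getElem.mp hm
        have hj0' : j0 < ωz.length := by
          rw [List.length_map, cs.length_rightInvSeq] at hj0
          exact hj0
        have hgetD : (cs.rightInvSeq (ωz ++ α)).getD j0 1 = cs.simple i := by
          rw [rightInvSeq_append cs]
          rw [List.getD_eq_getElem _ 1
            (by rw [List.length_append, List.length_map, cs.length_rightInvSeq]; omega)]
          rw [List.getElem_append_left hj0]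
          exact hval
        have hexch : w * cs.simple i = cs.wordProd (ωz.eraseIdx j0 ++ α) := by
          have h4 := cs.wordProd_mul_getD_rightInvSeq (ωz ++ α) j0
          rw [hΩprod, hgetD] at h4
          rw [h4, List.eraseIdx_append_of_lt_length hj0']
        have hz2le : cs.length (cs.wordProd (ωz.eraseIdx j0)) ≤ ωz.length - 1 := by
          have h5 := cs.length_wordProd_le (ωz.eraseIdx j0)
          have h6 := List.length_eraseIdx_add_one hj0'
          omega
        have hwsi : cs.length (w * cs.simple i) + 1 = cs.length w := by
          rcases cs.length_mul_simple w i with h1 | h1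
          · omega
          · exact h1
        have hwlen : cs.length w = ωz.length + α.length := by omega
        have hmulle := cs.length_mul_le (cs.wordProd (ωz.eraseIdx j0)) (cs.wordProd α)
        have hf : cs.length (w * cs.simple i)
            = cs.length (cs.wordProd (ωz.eraseIdx j0) * cs.wordProd α) := by
          rw [hexch, cs.wordProd_append]
        have hz2eq : cs.length (w * cs.simple i)
            = cs.length (cs.wordProd (ωz.eraseIdx j0)) + α.length := by
          omega
        refine ⟨cs.wordProd (ωz.eraseIdx j0), ?_, ?_⟩
        · calc w = (w * cs.simple i) * cs.simple i := by
                rw [mul_assoc, cs.simple_mul_simple_self, mul_one]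
            _ = cs.wordProd (ωz.eraseIdx j0 ++ α) * cs.simple i := by rw [hexch]
            _ = cs.wordProd (ωz.eraseIdx j0) * (cs.wordProd α * cs.simple i) := by
                rw [cs.wordProd_append]; group
            _ = cs.wordProd (ωz.eraseIdx j0) * cs.wordProd (α ++ [i]) := by rw [hπαi]
        · rw [List.length_append]
          simp only [List.length_singleton]
          omega
  intro u hu
  obtain ⟨ω, hred, hlet, hprod⟩ := exists_reduced_par_word cs Sg hSg (inv_mem hu)
  obtain ⟨z, hz, hzl⟩ := main ω hred hlet
  have hωlen : ω.length = cs.length u := by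
    have h0 := hred
    unfold CoxeterSystem.IsReduced at h0
    rw [hprod, cs.length_inv] at h0
    omega
  have hwu : w * u = z := by rw [hz, hprod]; group
  rw [hwu]
  omega

/-- Left version: if every element of `Σ` is a left descent of `v`, then
`ℓ(uv) = ℓ(v) - ℓ(u)` for every `u ∈ W_Σ`. -/
lemma descent_absorb_left (Sg : Set W) (hSg : Sg ⊆ simpleSet cs) {v : W}
    (hd : ∀ σ ∈ Sg, cs.length (σ * v) < cs.length v) :
    ∀ u ∈ par Sg, cs.length (u * v) + cs.length u = cs.length v := by
  have hd' : ∀ σ ∈ Sg, cs.length (v⁻¹ * σ) < cs.length v⁻¹ := by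
    intro σ hσ
    obtain ⟨i, hi⟩ := hSg hσ
    have hσinv : σ⁻¹ = σ := by rw [← hi, cs.inv_simple]
    have : (v⁻¹ * σ)⁻¹ = σ * v := by rw [mul_inv_rev, inv_inv, hσinv]
    rw [← cs.length_inv (v⁻¹ * σ), this, cs.length_inv]
    exact hd σ hσ
  intro u hu
  have := descent_absorb_right cs Sg hSg hd' u⁻¹ (inv_mem hu)
  rw [cs.length_inv] at this
  have heq : v⁻¹ * u⁻¹ = (u * v)⁻¹ := by rw [mul_inv_rev]
  rw [heq, cs.length_inv, cs.length_inv] at this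
  exact this

end DescentAbsorb

section Finiteness

lemma boundedProducts_finite (A : Set W) (hA : A.Finite) :
    ∀ N : ℕ, {w : W | ∃ l : List W, (∀ x ∈ l, x ∈ A) ∧ l.length ≤ N ∧ l.prod = w}.Finite := by
  intro N
  induction N with
  | zero =>
    apply Set.Finite.subset (Set.finite_singleton (1 : W))
    rintro w ⟨l, _, hlen, rfl⟩
    have : l = [] := List.length_eq_zero_iff.mp (by omega)
    simp [this]
  | succ N ihN =>
    apply Set.Finite.subset (ihN.union (Set.Finite.biUnion hA
      (fun a _ => ihN.image (fun x => a * x))))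
    rintro w ⟨l, hl, hlen, rfl⟩
    cases l with
    | nil =>
      left
      exact ⟨[], by simp, by simp, rfl⟩
    | cons a l' =>
      right
      refine Set.mem_biUnion (hl a (by simp)) ?_
      refine ⟨l'.prod, ⟨l', fun x hx => hl x (by simp [hx]), ?_, rfl⟩, ?_⟩
      · simp at hlen; omega
      · rw [List.prod_cons]

lemma par_finite_of_le_length (Sg : Set W) (hSg : Sg ⊆ simpleSet cs) (hfinS : Sg.Finite)
    (N : ℕ) (hbound : ∀ u ∈ par Sg, cs.length u ≤ N) : ((par Sg : Set W)).Finite := by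
  apply Set.Finite.subset (boundedProducts_finite Sg hfinS N)
  intro u hu
  obtain ⟨ω, hred, hlet, rfl⟩ := exists_reduced_par_word cs Sg hSg hu
  refine ⟨ω.map cs.simple, ?_, ?_, ?_⟩
  · intro x hx
    obtain ⟨i, hi, rfl⟩ := List.mem_map.mp hx
    exact hlet i hi
  · rw [List.length_map]
    have h1 := hbound _ hu
    have h2 : cs.length (cs.wordProd ω) = ω.length := hred
    omega
  · rfl

end Finiteness

section Longest

lemma exists_isLongest (Sg : Set W) (hfin : ((par Sg : Set W)).Finite) :
    ∃ x, IsLongest cs Sg x := by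
  have hne : ((par Sg : Set W)).Nonempty := ⟨1, one_mem _⟩
  obtain ⟨x, hx, hmax⟩ := Set.Finite.exists_maximalFor cs.length _ hfin hne
  refine ⟨x, hx, fun u hu => ?_⟩
  by_contra h
  push_neg at h
  have := hmax hu (le_of_lt h)
  omega

lemma isLongest_longest (Sg : Set W) (hfin : ((par Sg : Set W)).Finite) :
    IsLongest cs Sg (longest cs Sg) := by
  have hex := exists_isLongest cs Sg hfin
  unfold longest
  rw [dif_pos hex]
  exact hex.choose_spec

lemma invSet_isLongest (Sg : Set W) (hSg : Sg ⊆ simpleSet cs) {x : W}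
    (hx : IsLongest cs Sg x) : invSet cs x = parRefl Sg := by
  apply Set.Subset.antisymm
  · obtain ⟨ω, hred, hlet, hπ⟩ := exists_reduced_par_word cs Sg hSg hx.1
    intro t ht
    rw [← hπ, mem_invSet_iff_mem_leftInvSeq cs hred] at ht
    obtain ⟨j, hj, hval⟩ := List.mem_iff_getElem.mp ht
    have hj' : j < ω.length := by rwa [cs.length_leftInvSeq] at hj
    have hform := cs.getD_leftInvSeq ω j
    rw [List.getD_eq_getElem _ 1 hj, hval, List.getElem?_eq_getElem hj'] at hform
    refine ⟨cs.wordProd (ω.take j),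
      wordProd_mem_par cs Sg (fun i hi => hlet i (List.mem_of_mem_take hi)),
      cs.simple (ω.get ⟨j, hj'⟩), hlet _ (List.get_mem ω ⟨j, hj'⟩), ?_⟩
    rw [hform]
    rfl
  · intro t ht
    refine ⟨isReflection_of_mem_parRefl cs Sg hSg ht, ?_⟩
    have htx : t * x ∈ par Sg := mul_mem (parRefl_subset_par Sg ht) hx.1
    have hle := hx.2 _ htx
    have hne := (isReflection_of_mem_parRefl cs Sg hSg ht).length_mul_right_ne x
    omega

lemma eq_of_invSet_eq : ∀ (n : ℕ) (x y : W), cs.length x = n →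
    invSet cs x = invSet cs y → x = y := by
  intro n
  induction n using Nat.strong_induction_on with
  | _ n ih =>
  intro x y hlx hinv
  rcases Nat.eq_zero_or_pos n with h0 | h0
  · have hx1 : x = 1 := cs.length_eq_zero_iff.mp (by omega)
    subst hx1
    have hempty : invSet cs (1 : W) = ∅ := by
      ext t
      simp only [mem_invSet_iff, Set.mem_empty_iff_false, iff_false, not_and]
      intro _
      rw [mul_one, cs.length_one]
      omega
    rw [hempty] at hinv
    by_contra hne
    obtain ⟨i, hi⟩ := cs.exists_leftDescent_of_ne_one (fun h => hne h.symm)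
    have : cs.simple i ∈ invSet cs y := ⟨cs.isReflection_simple i, hi⟩
    rw [← hinv] at this
    exact absurd this (Set.notMem_empty _)
  · have hxne : x ≠ 1 := by
      intro h; rw [h, cs.length_one] at hlx; omega
    obtain ⟨i, hi⟩ := cs.exists_leftDescent_of_ne_one hxne
    have hsx : cs.simple i ∈ invSet cs x := ⟨cs.isReflection_simple i, hi⟩
    have hsy : cs.simple i ∈ invSet cs y := hinv ▸ hsx
    have key : ∀ z : W, cs.simple i ∈ invSet cs z →
        invSet cs (cs.simple i * z)
          = (fun t => cs.simple i * t * cs.simple i) '' (invSet cs z \ {cs.simple i}) := by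
      intro z hz
      have hℓsz : cs.length (cs.simple i * z) + 1 = cs.length z := by
        rcases cs.length_simple_mul z i with h1 | h1
        · exfalso; have := hz.2; omega
        · exact h1
      have hlen : cs.length (cs.simple i * (cs.simple i * z))
          = cs.length (cs.simple i) + cs.length (cs.simple i * z) := by
        rw [cs.simple_mul_simple_cancel_left, cs.length_simple]
        omega
      have hsplit := invSet_mul_of_length_add cs hlen
      rw [cs.simple_mul_simple_cancel_left] at hsplit
      have hinvsi : invSet cs (cs.simple i) = {cs.simple i} := by
        ext t
        simp only [mem_invSet_iff, Set.mem_singleton_iff]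
        constructor
        · rintro ⟨htr, hlt⟩
          rw [cs.length_simple] at hlt
          have h2 : cs.length (t * cs.simple i) = 0 := by omega
          have h3 := cs.length_eq_zero_iff.mp h2
          have h4 : t = (cs.simple i)⁻¹ := eq_inv_of_mul_eq_one_left h3
          rw [h4, cs.inv_simple]
        · rintro rfl
          refine ⟨cs.isReflection_simple i, ?_⟩
          rw [cs.simple_mul_simple_self, cs.length_one, cs.length_simple]
          omega
      apply Set.Subset.antisymm
      · intro t htm
        have h1 : cs.simple i * t * (cs.simple i)⁻¹ ∈ invSet cs z := by
          rw [hsplit]; right; exact ⟨t, htm, rfl⟩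
        rw [cs.inv_simple] at h1
        have h2 : cs.simple i * t * cs.simple i ≠ cs.simple i := by
          intro hc
          have h3 : t = cs.simple i := by
            have h4 := congrArg (fun x => cs.simple i * x * cs.simple i) hc
            rw [conj_simple_conj_simple] at h4
            rw [h4, cs.simple_mul_simple_self, one_mul]
          rw [h3] at htm
          have h5 := htm.2
          rw [cs.simple_mul_simple_cancel_left] at h5
          omega
        refine ⟨cs.simple i * t * cs.simple i, ⟨h1, h2⟩, ?_⟩
        exact conj_simple_conj_simple cs i t
      · rintro t ⟨r, ⟨hr, hrne⟩, rfl⟩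
        rw [hsplit] at hr
        rcases hr with hr | hr
        · rw [hinvsi] at hr; exact absurd hr hrne
        · obtain ⟨t', ht', hconj⟩ := hr
          have h6 : cs.simple i * r * cs.simple i = t' := by
            rw [← hconj, cs.inv_simple]
            exact conj_simple_conj_simple cs i t'
          show cs.simple i * r * cs.simple i ∈ invSet cs (cs.simple i * z)
          rw [h6]
          exact ht'
    have hx2 := key x hsx
    have hy2 := key y hsy
    rw [hinv] at hx2
    rw [← hy2] at hx2
    have hlx' : cs.length (cs.simple i * x) = n - 1 := by
      rcases cs.length_simple_mul x i with h1 | h1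
      · exfalso; have := hsx.2; omega
      · omega
    have heq := ih (n - 1) (by omega) (cs.simple i * x) (cs.simple i * y) hlx' hx2
    have := congrArg (fun u => cs.simple i * u) heq
    simpa [cs.simple_mul_simple_cancel_left] using this

lemma isLongest_unique (Sg : Set W) (hSg : Sg ⊆ simpleSet cs) {x y : W}
    (hx : IsLongest cs Sg x) (hy : IsLongest cs Sg y) : x = y :=
  eq_of_invSet_eq cs (cs.length x) x y rfl
    (by rw [invSet_isLongest cs Sg hSg hx, invSet_isLongest cs Sg hSg hy])

lemma isLongest_inv (Sg : Set W) {x : W} (hx : IsLongest cs Sg x) :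
    IsLongest cs Sg x⁻¹ :=
  ⟨inv_mem hx.1, fun u hu => by rw [cs.length_inv]; exact hx.2 u hu⟩

lemma longest_inv (Sg : Set W) (hSg : Sg ⊆ simpleSet cs)
    (hfin : ((par Sg : Set W)).Finite) : (longest cs Sg)⁻¹ = longest cs Sg :=
  isLongest_unique cs Sg hSg (isLongest_inv cs Sg (isLongest_longest cs Sg hfin))
    (isLongest_longest cs Sg hfin)

end Longest


/-- for `w ∈ N(Σ, Σ')` with `W_Σ, W_{Σ'}` finite and `s ∈ S ∖ Σ'`, one has
`D(w₀^{Σ'}w) ∖ Σ' = D(w)` and `T(w₀^{Σ'}w) ∖ T_{Σ'} = T(w)`, and the conditions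
(i) `ℓ(sw) = ℓ(w) − 1`; (ii) `s ∈ D(w)`; (iii) `W_{Σ'∪{s}}` is finite and
`ℓ(w₀^{Σ'∪{s}} w₀^{Σ'} w) = ℓ(w) − ℓ(w₀^{Σ'∪{s}} w₀^{Σ'})`;
(iv) `T_{Σ'∪{s}} ∖ T_{Σ'} ⊆ T(w)` are all equivalent. -/
theorem descent_dichotomy (Sg Sg' : Set W) (hSg : Sg ⊆ simpleSet cs)
    (hSg' : Sg' ⊆ simpleSet cs) (hfin : ((par Sg : Set W)).Finite)
    (hfin' : ((par Sg' : Set W)).Finite)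
    (w : W) (hw : w ∈ relN cs Sg Sg') (s : W) (hs : s ∈ simpleSet cs \ Sg') :
    descSet cs (longest cs Sg' * w) \ Sg' = descSet cs w ∧
    invSet cs (longest cs Sg' * w) \ parRefl Sg' = invSet cs w ∧
    [cs.length (s * w) + 1 = cs.length w,
      s ∈ descSet cs w,
      ((par (Sg' ∪ {s}) : Set W)).Finite ∧
        cs.length (tilde cs Sg' s * w) + cs.length (tilde cs Sg' s) = cs.length w,
      parRefl (Sg' ∪ {s}) \ parRefl Sg' ⊆ invSet cs w].TFAE := by
  classical
  obtain ⟨hwR, hwL, hconj⟩ := hw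
  set w₀' := longest cs Sg' with hw₀'def
  have hL' : IsLongest cs Sg' w₀' := isLongest_longest cs Sg' hfin'
  have hinv' : invSet cs w₀' = parRefl Sg' := invSet_isLongest cs Sg' hSg' hL'
  have hw₀'inv : w₀'⁻¹ = w₀' := longest_inv cs Sg' hSg' hfin'
  have F3 : ∀ u ∈ par Sg', cs.length (u * w) = cs.length u + cs.length w :=
    length_mul_of_minLeft cs Sg' hSg' hwL
  have F4 : ∀ u ∈ par Sg, cs.length (w * u) = cs.length u + cs.length w := by
    intro u hu
    have h1 := length_mul_of_minLeft cs Sg hSg hwR u⁻¹ (inv_mem hu)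
    have h2 : (u⁻¹ * w⁻¹) = (w * u)⁻¹ := by rw [mul_inv_rev]
    rw [h2, cs.length_inv, cs.length_inv, cs.length_inv] at h1
    exact h1
  have hconjfun : ∀ u ∈ par Sg, w * u * w⁻¹ ∈ par Sg' := by
    intro u hu
    have h : w * u * w⁻¹ ∈ (fun u => w * u * w⁻¹) '' (par Sg : Set W) := ⟨u, hu, rfl⟩
    rw [hconj] at h
    exact h
  have hconjback : ∀ u' ∈ par Sg', w⁻¹ * u' * w ∈ par Sg := by
    intro u' hu'
    have hu'' : u' ∈ (fun u => w * u * w⁻¹) '' (par Sg : Set W) := by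
      rw [hconj]
      exact hu'
    obtain ⟨u, hu, heq⟩ := hu''
    simp only at heq
    have h : w⁻¹ * (w * u * w⁻¹) * w = u := by group
    rw [heq] at h
    rw [h]
    exact hu
  have F5 : ∀ u ∈ par Sg, cs.length (w * u * w⁻¹) = cs.length u := by
    intro u hu
    have h1 := F3 _ (hconjfun u hu)
    have h2 : w * u * w⁻¹ * w = w * u := by group
    rw [h2] at h1
    have h3 := F4 u hu
    omega
  have F5' : ∀ u' ∈ par Sg', cs.length (w⁻¹ * u' * w) = cs.length u' := by
    intro u' hu'
    have hu := hconjback u' hu'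
    have h1 := F5 _ hu
    have h2 : w * (w⁻¹ * u' * w) * w⁻¹ = u' := by group
    rw [h2] at h1
    omega
  set w₀c := w⁻¹ * w₀' * w with hw₀cdef
  have hw₀c_par : w₀c ∈ par Sg := hconjback w₀' hL'.1
  have hw₀c_len : cs.length w₀c = cs.length w₀' := F5' w₀' hL'.1
  have hw₀c_long : IsLongest cs Sg w₀c := by
    refine ⟨hw₀c_par, fun u hu => ?_⟩
    rw [hw₀c_len, ← F5 u hu]
    exact hL'.2 _ (hconjfun u hu)
  have hinvc : invSet cs w₀c = parRefl Sg := invSet_isLongest cs Sg hSg hw₀c_long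
  have hfact : w₀' * w = w * w₀c := by rw [hw₀cdef]; group
  have hlen_add : cs.length (w * w₀c) = cs.length w + cs.length w₀c := by
    rw [F4 _ hw₀c_par]
    omega
  have F11 : (fun t => w * t * w⁻¹) '' parRefl Sg = parRefl Sg' := by
    apply Set.Subset.antisymm
    · rintro t' ⟨t, ⟨u, hu, σ, hσ, rfl⟩, rfl⟩
      have hσpar : σ ∈ par Sg := Subgroup.subset_closure hσ
      have hσ'len : cs.length (w * σ * w⁻¹) = 1 := by
        rw [F5 σ hσpar]
        obtain ⟨i, hi⟩ := hSg hσ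
        rw [← hi, cs.length_simple]
      have hσ' : w * σ * w⁻¹ ∈ Sg' :=
        mem_of_mem_par_length_one cs Sg' hSg' (hconjfun σ hσpar) hσ'len
      refine ⟨w * u * w⁻¹, hconjfun u hu, w * σ * w⁻¹, hσ', ?_⟩
      group
    · rintro t' ⟨u', hu', σ', hσ', rfl⟩
      have hσ'par : σ' ∈ par Sg' := Subgroup.subset_closure hσ'
      have hσlen : cs.length (w⁻¹ * σ' * w) = 1 := by
        rw [F5' σ' hσ'par]
        obtain ⟨i, hi⟩ := hSg' hσ'
        rw [← hi, cs.length_simple]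
      have hσmem : w⁻¹ * σ' * w ∈ Sg :=
        mem_of_mem_par_length_one cs Sg hSg (hconjback σ' hσ'par) hσlen
      refine ⟨(w⁻¹ * u' * w) * (w⁻¹ * σ' * w) * (w⁻¹ * u' * w)⁻¹,
        ⟨w⁻¹ * u' * w, hconjback u' hu', w⁻¹ * σ' * w, hσmem, rfl⟩, ?_⟩
      group
  have F12 : invSet cs (w₀' * w) = invSet cs w ∪ parRefl Sg' := by
    rw [hfact, invSet_mul_of_length_add cs hlen_add, hinvc, F11]
  have hdisj : ∀ t, t ∈ invSet cs w → t ∉ parRefl Sg' := by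
    intro t h1 h2
    have h : t ∈ invSet cs w ∩ parRefl Sg' := ⟨h1, h2⟩
    rw [hwL] at h
    exact h
  have goal2 : invSet cs (w₀' * w) \ parRefl Sg' = invSet cs w := by
    rw [F12]
    ext t
    simp only [Set.mem_diff, Set.mem_union]
    constructor
    · rintro ⟨h1 | h1, h2⟩
      · exact h1
      · exact absurd h1 h2
    · intro h1
      exact ⟨Or.inl h1, hdisj t h1⟩
  have hsimple_par' : ∀ t ∈ parRefl Sg', t ∈ simpleSet cs → t ∈ Sg' := by
    intro t ht hts
    obtain ⟨i, hi⟩ := hts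
    refine mem_of_mem_par_length_one cs Sg' hSg' (parRefl_subset_par Sg' ht) ?_
    rw [← hi, cs.length_simple]
  have goal1 : descSet cs (w₀' * w) \ Sg' = descSet cs w := by
    unfold descSet
    ext t
    simp only [Set.mem_diff, Set.mem_inter_iff]
    constructor
    · rintro ⟨⟨h1, h2⟩, h3⟩
      rw [F12] at h1
      rcases h1 with h1 | h1
      · exact ⟨h1, h2⟩
      · exact absurd (hsimple_par' t h1 h2) h3
    · rintro ⟨h1, h2⟩
      refine ⟨⟨?_, h2⟩, ?_⟩
      · rw [F12]; exact Or.inl h1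
      · intro h3
        exact hdisj t h1 (simple_mem_parRefl Sg' h3)
  refine ⟨goal1, goal2, ?_⟩
  obtain ⟨hsS, hsnot⟩ := hs
  obtain ⟨is, his⟩ := hsS
  set Sg'' : Set W := Sg' ∪ {s} with hSg''def
  have hSg''sub : Sg'' ⊆ simpleSet cs := by
    intro x hx
    rcases hx with hx | hx
    · exact hSg' hx
    · rw [Set.mem_singleton_iff] at hx
      rw [hx]
      exact ⟨is, his⟩
  have hparmono : par Sg' ≤ par Sg'' := Subgroup.closure_mono Set.subset_union_left
  tfae_have 1 → 2
  · intro h1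
    refine ⟨⟨?_, by omega⟩, ⟨is, his⟩⟩
    rw [← his]
    exact cs.isReflection_simple is
  tfae_have 2 → 1
  · intro h2
    have hlt := h2.1.2
    rcases cs.length_simple_mul w is with h | h
    · rw [his] at h
      omega
    · rw [his] at h
      exact h
  tfae_have 2 → 3
  · intro h2
    have hsinv : s ∈ invSet cs w := h2.1
    have hv_desc : ∀ σ ∈ Sg'', cs.length (σ * (w₀' * w)) < cs.length (w₀' * w) := by
      intro σ hσ
      have h : σ ∈ invSet cs (w₀' * w) := by
        rw [F12]
        rcases hσ with hσ | hσ
        · exact Or.inr (simple_mem_parRefl Sg' hσ)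
        · rw [Set.mem_singleton_iff] at hσ
          subst hσ
          exact Or.inl hsinv
      exact h.2
    have habs : ∀ u ∈ par Sg'',
        cs.length (u * (w₀' * w)) + cs.length u = cs.length (w₀' * w) :=
      descent_absorb_left cs Sg'' hSg''sub hv_desc
    have hSg'fin : Sg'.Finite := hfin'.subset (fun σ hσ => Subgroup.subset_closure hσ)
    have hSg''fin : Sg''.Finite := hSg'fin.union (Set.finite_singleton s)
    have hfin'' : ((par Sg'' : Set W)).Finite := by
      apply par_finite_of_le_length cs Sg'' hSg''sub hSg''fin (cs.length (w₀' * w))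
      intro u hu
      have := habs u hu
      omega
    refine ⟨hfin'', ?_⟩
    set w₀'' := longest cs Sg'' with hw₀''def
    have hL'' : IsLongest cs Sg'' w₀'' := isLongest_longest cs Sg'' hfin''
    have hinv'' : invSet cs w₀'' = parRefl Sg'' := invSet_isLongest cs Sg'' hSg''sub hL''
    have hw₀''inv : w₀''⁻¹ = w₀'' := longest_inv cs Sg'' hSg''sub hfin''
    have h9 : cs.length (w₀' * w) = cs.length w₀' + cs.length w := F3 w₀' hL'.1
    have hst : tilde cs Sg' s = w₀'' * w₀' := rfl
    have h10 : cs.length (w₀'' * (w₀' * w)) + cs.length w₀'' = cs.length (w₀' * w) :=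
      habs w₀'' hL''.1
    have h11 : cs.length (w₀' * w₀'') + cs.length w₀' = cs.length w₀'' :=
      length_mul_of_inv_superset cs Sg'' hSg''sub (by rw [hinv'']) w₀' (hparmono hL'.1)
    have h12' : cs.length (w₀'' * w₀') = cs.length (w₀' * w₀'') := by
      rw [← cs.length_inv (w₀'' * w₀'), mul_inv_rev, hw₀'inv, hw₀''inv]
    rw [hst]
    have hassoc : w₀'' * w₀' * w = w₀'' * (w₀' * w) := by rw [mul_assoc]
    rw [hassoc, h12']
    omega
  tfae_have 3 → 4
  · rintro ⟨hfin'', hlen3⟩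
    set w₀'' := longest cs Sg'' with hw₀''def
    have hL'' : IsLongest cs Sg'' w₀'' := isLongest_longest cs Sg'' hfin''
    have hinv'' : invSet cs w₀'' = parRefl Sg'' := invSet_isLongest cs Sg'' hSg''sub hL''
    have hw₀''inv : w₀''⁻¹ = w₀'' := longest_inv cs Sg'' hSg''sub hfin''
    have h11 : cs.length (w₀' * w₀'') + cs.length w₀' = cs.length w₀'' :=
      length_mul_of_inv_superset cs Sg'' hSg''sub (by rw [hinv'']) w₀' (hparmono hL'.1)
    have hst : tilde cs Sg' s = w₀'' * w₀' := rfl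
    have hstinv : (tilde cs Sg' s)⁻¹ = w₀' * w₀'' := by
      rw [hst, mul_inv_rev, hw₀'inv, hw₀''inv]
    have hw1 : w₀' * w₀' = 1 := by
      nth_rewrite 1 [← hw₀'inv]
      exact inv_mul_cancel w₀'
    have hw_add : cs.length ((tilde cs Sg' s)⁻¹ * (tilde cs Sg' s * w))
        = cs.length ((tilde cs Sg' s)⁻¹) + cs.length (tilde cs Sg' s * w) := by
      have h1 : (tilde cs Sg' s)⁻¹ * (tilde cs Sg' s * w) = w := by group
      rw [h1, cs.length_inv]
      omega
    have hsplitw := invSet_mul_of_length_add cs hw_add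
    have h1 : (tilde cs Sg' s)⁻¹ * (tilde cs Sg' s * w) = w := by group
    rw [h1] at hsplitw
    have hsub : invSet cs ((tilde cs Sg' s)⁻¹) ⊆ invSet cs w := by
      rw [hsplitw]
      exact Set.subset_union_left
    have h2'' : w₀' * (w₀' * w₀'') = w₀'' := by
      rw [← mul_assoc, hw1, one_mul]
    have hadd'' : cs.length (w₀' * (w₀' * w₀''))
        = cs.length w₀' + cs.length (w₀' * w₀'') := by
      rw [h2'']
      omega
    have hsplit'' := invSet_mul_of_length_add cs hadd''
    rw [h2''] at hsplit''
    intro t ht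
    obtain ⟨ht'', htn'⟩ := ht
    have hstab2 : w₀' * t * w₀'⁻¹ ∉ parRefl Sg' := by
      intro hc
      apply htn'
      have h5 : w₀'⁻¹ * (w₀' * t * w₀'⁻¹) * (w₀'⁻¹)⁻¹ ∈ parRefl Sg' :=
        conj_mem_parRefl Sg' (inv_mem hL'.1) hc
      have h6 : w₀'⁻¹ * (w₀' * t * w₀'⁻¹) * (w₀'⁻¹)⁻¹ = t := by group
      rwa [h6] at h5
    have h6 : w₀' * t * w₀'⁻¹ ∈ invSet cs w₀'' := by
      rw [hinv'']
      exact conj_mem_parRefl Sg'' (hparmono hL'.1) ht''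
    rw [hsplit''] at h6
    rcases h6 with h6 | h6
    · rw [hinv'] at h6
      exact absurd h6 hstab2
    · obtain ⟨r, hr, hreq⟩ := h6
      simp only at hreq
      have hrt : r = t := by
        calc r = w₀'⁻¹ * (w₀' * r * w₀'⁻¹) * w₀' := by group
          _ = w₀'⁻¹ * (w₀' * t * w₀'⁻¹) * w₀' := by rw [hreq]
          _ = t := by group
      rw [hrt] at hr
      apply hsub
      rw [hstinv]
      exact hr
  tfae_have 4 → 2
  · intro h4
    have hs1 : s ∈ parRefl Sg'' := simple_mem_parRefl Sg'' (Or.inr rfl)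
    have hs2 : s ∉ parRefl Sg' := by
      intro hc
      apply hsnot
      apply mem_of_mem_par_length_one cs Sg' hSg' (parRefl_subset_par Sg' hc)
      rw [← his, cs.length_simple]
    exact ⟨h4 ⟨hs1, hs2⟩, ⟨is, his⟩⟩
  tfae_finish


end RelativeCoxeter
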